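/- Let (Φ_t)_{t≥0} be a semigroup of linear, positive, trace-preserving maps on M_n(ℂ) (Φ_0 = id, Φ_{t+s} = Φ_t ∘ Φ_s), let ρ° be a state with Φ_t(ρ°) = ρ° for all t ≥ 0, and suppose there are t₀ > 0 and ε ∈ (0,1] such that Φ_{t₀}(ρ) ≥ ε·ρ° (Loewner order) for every state ρ. Then for every t ≥ 0 and every state ρ, ‖Φ_t(ρ) − ρ°‖₁ ≤ (1 − ε)^{⌊t/t₀⌋} · ‖ρ − ρ°‖₁. -/

import Mathlib

open scoped ComplexOrder

/-- The trace norm of a matrix: `‖A‖₁ = Tr √(Aᴴ A)`.  For a Hermitian matrix this is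
the sum of the absolute values of its eigenvalues. -/
noncomputable def traceNorm {n : ℕ} (A : Matrix (Fin n) (Fin n) ℂ) : ℝ :=
  (((Matrix.posSemidef_conjTranspose_mul_self A).1.eigenvectorUnitary : Matrix (Fin n) (Fin n) ℂ) *
    Matrix.diagonal (fun i => ((√((Matrix.posSemidef_conjTranspose_mul_self A).1.eigenvalues i) : ℝ) : ℂ)) *
    (star (Matrix.posSemidef_conjTranspose_mul_self A).1.eigenvectorUnitary :
      Matrix (Fin n) (Fin n) ℂ)).trace.re

open Matrix

variable {n : ℕ}

-- trace of unitary conjugation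
lemma trace_conj_unitary (U : Matrix.unitaryGroup (Fin n) ℂ) (D : Matrix (Fin n) (Fin n) ℂ) :
    ((U : Matrix (Fin n) (Fin n) ℂ) * D * star (U : Matrix (Fin n) (Fin n) ℂ)).trace = D.trace := by
  rw [Matrix.trace_mul_cycle]
  rw [(Matrix.mem_unitaryGroup_iff').mp U.2, one_mul]

lemma smul_posSemidef {c : ℝ} (hc : 0 ≤ c) {A : Matrix (Fin n) (Fin n) ℂ}
    (hA : A.PosSemidef) : ((c : ℂ) • A).PosSemidef := by
  refine Matrix.PosSemidef.of_dotProduct_mulVec_nonneg ?_ ?_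
  · unfold Matrix.IsHermitian
    rw [Matrix.conjTranspose_smul, hA.1]
    norm_num
  · intro x
    rw [Matrix.smul_mulVec, dotProduct_smul]
    exact smul_nonneg (by exact_mod_cast hc) (hA.dotProduct_mulVec_nonneg x)

lemma diag_nonneg {A : Matrix (Fin n) (Fin n) ℂ} (hA : A.PosSemidef) (i : Fin n) :
    0 ≤ (A i i).re := by
  have h := hA.dotProduct_mulVec_nonneg (Pi.single i 1)
  rw [Complex.nonneg_iff] at h
  have : dotProduct (star (Pi.single i 1)) (A *ᵥ Pi.single i 1) = A i i := by
    simp [Matrix.mulVec_single, dotProduct, Pi.single_apply]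
  rw [this] at h
  exact h.1

lemma traceNorm_hermitian {A : Matrix (Fin n) (Fin n) ℂ} (hA : A.IsHermitian) :
    traceNorm A = ∑ i, |hA.eigenvalues i| := by
  set U : Matrix (Fin n) (Fin n) ℂ := (Matrix.IsHermitian.eigenvectorUnitary hA : Matrix (Fin n) (Fin n) ℂ) with hU
  set d : Fin n → ℝ := hA.eigenvalues with hd
  set M : Matrix (Fin n) (Fin n) ℂ :=
    U * Matrix.diagonal (fun i => ((|d i| : ℝ) : ℂ)) * star U with hM
  have hUU : star U * U = 1 := (Matrix.mem_unitaryGroup_iff').mp (Matrix.IsHermitian.eigenvectorUnitary hA).2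
  have hMpsd : M.PosSemidef := by
    rw [hM, Matrix.star_eq_conjTranspose]
    exact Matrix.PosSemidef.mul_mul_conjTranspose_same
      (Matrix.PosSemidef.diagonal (fun i => by positivity)) U
  have hspec := hA.spectral_theorem
  have key : ∀ D E : (Fin n) → ℂ,
      (U * Matrix.diagonal D * star U) * (U * Matrix.diagonal E * star U)
        = U * Matrix.diagonal (fun i => D i * E i) * star U := by
    intro D E
    simp only [Matrix.mul_assoc]
    rw [← Matrix.mul_assoc (star U) U, hUU, one_mul,
        ← Matrix.mul_assoc (Matrix.diagonal D) (Matrix.diagonal E),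
        Matrix.diagonal_mul_diagonal]
  have hMsq : M ^ 2 = Aᴴ * A := by
    rw [hA.eq]
    conv_rhs => rw [hspec, Unitary.conjStarAlgAut_apply, ← hU]
    rw [pow_two, hM, key]
    rw [key]
    have heq : (fun i => ((|d i| : ℝ) : ℂ) * ((|d i| : ℝ) : ℂ))
        = fun i => (RCLike.ofReal ∘ hA.eigenvalues) i * (RCLike.ofReal ∘ hA.eigenvalues) i := by
      funext i
      simp only [Function.comp_apply]
      norm_cast
      exact congrArg _ (abs_mul_abs_self (d i))
    rw [heq]
  have hsqrt : M = (((Matrix.posSemidef_conjTranspose_mul_self A).1.eigenvectorUnitary : Matrix (Fin n) (Fin n) ℂ) *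
      Matrix.diagonal (fun i => ((√((Matrix.posSemidef_conjTranspose_mul_self A).1.eigenvalues i) : ℝ) : ℂ)) *
      (star (Matrix.posSemidef_conjTranspose_mul_self A).1.eigenvectorUnitary :
        Matrix (Fin n) (Fin n) ℂ)) := by
    have hB := Matrix.posSemidef_conjTranspose_mul_self A
    set V : Matrix (Fin n) (Fin n) ℂ := (hB.1.eigenvectorUnitary : Matrix (Fin n) (Fin n) ℂ) with hV
    have hVV : star V * V = 1 := (Matrix.mem_unitaryGroup_iff').mp hB.1.eigenvectorUnitary.2
    have hN : (V * Matrix.diagonal (fun i => ((√(hB.1.eigenvalues i) : ℝ) : ℂ)) * star V).PosSemidef := by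
      rw [Matrix.star_eq_conjTranspose]
      exact Matrix.PosSemidef.mul_mul_conjTranspose_same
        (Matrix.PosSemidef.diagonal (fun i => by positivity)) V
    have hNsq : (V * Matrix.diagonal (fun i => ((√(hB.1.eigenvalues i) : ℝ) : ℂ)) * star V) *
        (V * Matrix.diagonal (fun i => ((√(hB.1.eigenvalues i) : ℝ) : ℂ)) * star V) = Aᴴ * A := by
      conv_rhs => rw [hB.1.spectral_theorem, Unitary.conjStarAlgAut_apply, ← hV]
      simp only [Matrix.mul_assoc]
      rw [← Matrix.mul_assoc (star V) V, hVV, one_mul,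
          ← Matrix.mul_assoc (Matrix.diagonal _) (Matrix.diagonal _),
          Matrix.diagonal_mul_diagonal]
      congr 3
      funext i
      simp only [Function.comp_apply]
      norm_cast
      exact congrArg _ (Real.mul_self_sqrt (hB.eigenvalues_nonneg i))
    open scoped MatrixOrder in
    have e1 := (CFC.sqrt_eq_iff (Aᴴ * A) M (Matrix.nonneg_iff_posSemidef.mpr hB)
      (Matrix.nonneg_iff_posSemidef.mpr hMpsd)).mpr (by rw [← pow_two]; exact hMsq)
    open scoped MatrixOrder in
    have e2 := (CFC.sqrt_eq_iff (Aᴴ * A) _ (Matrix.nonneg_iff_posSemidef.mpr hB)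
      (Matrix.nonneg_iff_posSemidef.mpr hN)).mpr hNsq
    rw [← e1, e2]
  have htr : M.trace = ∑ i, ((|d i| : ℝ) : ℂ) := by
    rw [hM]
    rw [trace_conj_unitary (Matrix.IsHermitian.eigenvectorUnitary hA)]
    simp [Matrix.trace_diagonal]
  rw [traceNorm, ← hsqrt, htr]
  push_cast
  simp

lemma traceNorm_sub_le {P Q : Matrix (Fin n) (Fin n) ℂ}
    (hP : P.PosSemidef) (hQ : Q.PosSemidef) :
    traceNorm (P - Q) ≤ (P.trace).re + (Q.trace).re := by
  have hB : (P - Q).IsHermitian := hP.1.sub hQ.1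
  rw [traceNorm_hermitian hB]
  set U : Matrix (Fin n) (Fin n) ℂ := (Matrix.IsHermitian.eigenvectorUnitary hB : Matrix (Fin n) (Fin n) ℂ) with hU
  have hdiag : star U * (P - Q) * U = Matrix.diagonal (RCLike.ofReal ∘ hB.eigenvalues) := by
    have hUU : star U * U = 1 := (Matrix.mem_unitaryGroup_iff').mp hB.eigenvectorUnitary.2
    conv_lhs => rw [hB.spectral_theorem, Unitary.conjStarAlgAut_apply, ← hU]
    simp only [← Matrix.mul_assoc, hUU, one_mul]
    rw [Matrix.mul_assoc, hUU, mul_one]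
  set P' : Matrix (Fin n) (Fin n) ℂ := star U * P * U with hP'
  set Q' : Matrix (Fin n) (Fin n) ℂ := star U * Q * U with hQ'
  have hP'psd : P'.PosSemidef := by
    rw [hP', ← Matrix.conjTranspose_conjTranspose U, ← Matrix.star_eq_conjTranspose Uᴴ]
    exact hP.conjTranspose_mul_mul_same _
  have hQ'psd : Q'.PosSemidef := by
    rw [hQ', ← Matrix.conjTranspose_conjTranspose U, ← Matrix.star_eq_conjTranspose Uᴴ]
    exact hQ.conjTranspose_mul_mul_same _
  have hsub : star U * (P - Q) * U = P' - Q' := by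
    rw [hP', hQ', Matrix.mul_sub, Matrix.sub_mul]
  have heig : ∀ i, hB.eigenvalues i = (P' i i).re - (Q' i i).re := by
    intro i
    have h1 : (star U * (P - Q) * U) i i = ((hB.eigenvalues i : ℝ) : ℂ) := by
      rw [hdiag]; simp [Matrix.diagonal_apply_eq]
    rw [hsub] at h1
    have := congrArg Complex.re h1
    simpa [Complex.sub_re] using this.symm
  have htrP : ∑ i, (P' i i).re = (P.trace).re := by
    have h1 : P'.trace = P.trace := by
      rw [hP', Matrix.trace_mul_cycle,
        (Matrix.mem_unitaryGroup_iff).mp (Matrix.IsHermitian.eigenvectorUnitary hB).2, one_mul]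
    have := congrArg Complex.re h1
    rw [← this, Matrix.trace, Complex.re_sum]
    rfl
  have htrQ : ∑ i, (Q' i i).re = (Q.trace).re := by
    have h1 : Q'.trace = Q.trace := by
      rw [hQ', Matrix.trace_mul_cycle,
        (Matrix.mem_unitaryGroup_iff).mp (Matrix.IsHermitian.eigenvectorUnitary hB).2, one_mul]
    have := congrArg Complex.re h1
    rw [← this, Matrix.trace, Complex.re_sum]
    rfl
  rw [← htrP, ← htrQ, ← Finset.sum_add_distrib]
  apply Finset.sum_le_sum
  intro i _
  rw [heig i]
  have hp := diag_nonneg hP'psd i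
  have hq := diag_nonneg hQ'psd i
  exact abs_le.mpr ⟨by linarith, by linarith⟩

lemma jordan {A : Matrix (Fin n) (Fin n) ℂ} (hA : A.IsHermitian) :
    ∃ P Q : Matrix (Fin n) (Fin n) ℂ, ∃ p q : ℝ,
      P.PosSemidef ∧ Q.PosSemidef ∧ A = P - Q ∧ 0 ≤ p ∧ 0 ≤ q ∧
      P.trace = (p : ℂ) ∧ Q.trace = (q : ℂ) ∧ p + q = traceNorm A := by
  set U : Matrix (Fin n) (Fin n) ℂ := (Matrix.IsHermitian.eigenvectorUnitary hA : Matrix (Fin n) (Fin n) ℂ) with hU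
  set d : Fin n → ℝ := hA.eigenvalues with hd
  refine ⟨U * Matrix.diagonal (fun i => ((max (d i) 0 : ℝ) : ℂ)) * star U,
          U * Matrix.diagonal (fun i => ((max (-d i) 0 : ℝ) : ℂ)) * star U,
          ∑ i, max (d i) 0, ∑ i, max (-d i) 0, ?_, ?_, ?_, ?_, ?_, ?_, ?_, ?_⟩
  · rw [Matrix.star_eq_conjTranspose]
    exact Matrix.PosSemidef.mul_mul_conjTranspose_same
      (Matrix.PosSemidef.diagonal (fun i => by positivity)) U
  · rw [Matrix.star_eq_conjTranspose]
    exact Matrix.PosSemidef.mul_mul_conjTranspose_same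
      (Matrix.PosSemidef.diagonal (fun i => by positivity)) U
  · rw [← Matrix.sub_mul, ← Matrix.mul_sub, Matrix.diagonal_sub]
    conv_lhs => rw [hA.spectral_theorem, Unitary.conjStarAlgAut_apply]
    have heq : (fun i => ((max (d i) 0 : ℝ) : ℂ) - ((max (-d i) 0 : ℝ) : ℂ))
        = RCLike.ofReal ∘ hA.eigenvalues := by
      funext i
      simp only [Function.comp_apply]
      norm_cast
      rcases le_total (d i) 0 with h | h
      · rw [max_eq_right h, max_eq_left (by linarith)]; ring_nf; rfl
      · rw [max_eq_left h, max_eq_right (by linarith)]; ring_nf; rfl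
    rw [heq]
  · positivity
  · positivity
  · rw [trace_conj_unitary (Matrix.IsHermitian.eigenvectorUnitary hA), Matrix.trace_diagonal]
    push_cast; rfl
  · rw [trace_conj_unitary (Matrix.IsHermitian.eigenvectorUnitary hA), Matrix.trace_diagonal]
    push_cast; rfl
  · rw [traceNorm_hermitian hA, ← Finset.sum_add_distrib]
    apply Finset.sum_congr rfl
    intro i _
    rcases le_total (d i) 0 with h | h
    · rw [max_eq_right h, max_eq_left (by linarith), abs_of_nonpos h]; ring
    · rw [max_eq_left h, max_eq_right (by linarith), abs_of_nonneg h]; ring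

lemma herm_map (Ψ : Module.End ℂ (Matrix (Fin n) (Fin n) ℂ))
    (hp : ∀ A : Matrix (Fin n) (Fin n) ℂ, A.PosSemidef → (Ψ A).PosSemidef)
    {A : Matrix (Fin n) (Fin n) ℂ} (hA : A.IsHermitian) :
    (Ψ A).IsHermitian := by
  obtain ⟨P, Q, p, q, hPp, hQp, hPQ, _, _, _, _, _⟩ := jordan hA
  rw [hPQ, map_sub]
  exact ((hp P hPp).1).sub ((hp Q hQp).1)

set_option maxHeartbeats 1000000 in
lemma contraction_map (Ψ : Module.End ℂ (Matrix (Fin n) (Fin n) ℂ))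
    (hp : ∀ A : Matrix (Fin n) (Fin n) ℂ, A.PosSemidef → (Ψ A).PosSemidef)
    (htrΨ : ∀ A : Matrix (Fin n) (Fin n) ℂ, (Ψ A).trace = A.trace)
    {A : Matrix (Fin n) (Fin n) ℂ} (hA : A.IsHermitian) :
    traceNorm (Ψ A) ≤ traceNorm A := by
  obtain ⟨P, Q, p, q, hPp, hQp, hPQ, hp0, hq0, hPt, hQt, hpq⟩ := jordan hA
  rw [hPQ, map_sub]
  have h1 := traceNorm_sub_le (hp P hPp) (hp Q hQp)
  have e1 : ((Ψ P).trace).re = p := by rw [htrΨ P, hPt, Complex.ofReal_re]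
  have e2 : ((Ψ Q).trace).re = q := by rw [htrΨ Q, hQt, Complex.ofReal_re]
  rw [hPQ] at hpq
  linarith [h1, e1, e2, hpq]

lemma doeblin_step (Ψ : Module.End ℂ (Matrix (Fin n) (Fin n) ℂ))
    (hp : ∀ A : Matrix (Fin n) (Fin n) ℂ, A.PosSemidef → (Ψ A).PosSemidef)
    (htrΨ : ∀ A : Matrix (Fin n) (Fin n) ℂ, (Ψ A).trace = A.trace)
    (ρ₀ : Matrix (Fin n) (Fin n) ℂ) (hρ₀tr : ρ₀.trace = 1)
    (ε : ℝ) (hε1 : ε ≤ 1)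
    (hDoeblin : ∀ ρ : Matrix (Fin n) (Fin n) ℂ, ρ.PosSemidef → ρ.trace = 1 →
      (Ψ ρ - (ε : ℂ) • ρ₀).PosSemidef)
    {A : Matrix (Fin n) (Fin n) ℂ} (hA : A.IsHermitian) (hAtr : A.trace = 0) :
    traceNorm (Ψ A) ≤ (1 - ε) * traceNorm A := by
  obtain ⟨P, Q, p, q, hPp, hQp, hPQ, hp0, hq0, hPt, hQt, hpq⟩ := jordan hA
  have hpq' : p = q := by
    have h0 : (p : ℂ) - (q : ℂ) = 0 := by
      rw [← hPt, ← hQt, ← Matrix.trace_sub, ← hPQ, hAtr]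
    have : (p : ℂ) = (q : ℂ) := by linear_combination h0
    exact_mod_cast this
  subst hpq'
  rcases eq_or_lt_of_le hp0 with hzero | hppos
  · -- p = 0 : traceNorm A = 0
    have hTA : traceNorm A = 0 := by rw [← hpq, ← hzero]; ring
    have hc := contraction_map Ψ hp htrΨ hA
    rw [hTA] at hc ⊢
    linarith
  · -- 0 < p
    have hpne : (p : ℂ) ≠ 0 := by exact_mod_cast ne_of_gt hppos
    set ρP : Matrix (Fin n) (Fin n) ℂ := ((p⁻¹ : ℝ) : ℂ) • P with hρP
    set ρQ : Matrix (Fin n) (Fin n) ℂ := ((p⁻¹ : ℝ) : ℂ) • Q with hρQ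
    have hρPpsd : ρP.PosSemidef := smul_posSemidef (inv_nonneg.mpr hp0) hPp
    have hρQpsd : ρQ.PosSemidef := smul_posSemidef (inv_nonneg.mpr hp0) hQp
    have hρPtr : ρP.trace = 1 := by
      rw [hρP, Matrix.trace_smul, hPt, smul_eq_mul]
      norm_cast
      field_simp
    have hρQtr : ρQ.trace = 1 := by
      rw [hρQ, Matrix.trace_smul, hQt, smul_eq_mul]
      norm_cast
      field_simp
    have hXpsd : ((p : ℂ) • (Ψ ρP - (ε : ℂ) • ρ₀)).PosSemidef :=
      smul_posSemidef hp0 (hDoeblin ρP hρPpsd hρPtr)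
    have hYpsd : ((p : ℂ) • (Ψ ρQ - (ε : ℂ) • ρ₀)).PosSemidef :=
      smul_posSemidef hp0 (hDoeblin ρQ hρQpsd hρQtr)
    have hPrec : (p : ℂ) • ρP = P := by
      rw [hρP, smul_smul, ← Complex.ofReal_mul, mul_inv_cancel₀ (ne_of_gt hppos)]
      simp
    have hQrec : (p : ℂ) • ρQ = Q := by
      rw [hρQ, smul_smul, ← Complex.ofReal_mul, mul_inv_cancel₀ (ne_of_gt hppos)]
      simp
    have hEq : Ψ A = ((p : ℂ) • (Ψ ρP - (ε : ℂ) • ρ₀)) - ((p : ℂ) • (Ψ ρQ - (ε : ℂ) • ρ₀)) := by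
      rw [hPQ, map_sub]
      rw [show Ψ P = (p : ℂ) • Ψ ρP by rw [← _root_.map_smul, hPrec]]
      rw [show Ψ Q = (p : ℂ) • Ψ ρQ by rw [← _root_.map_smul, hQrec]]
      rw [smul_sub, smul_sub]
      abel
    have h1 := traceNorm_sub_le hXpsd hYpsd
    have e1 : (((p : ℂ) • (Ψ ρP - (ε : ℂ) • ρ₀)).trace).re = p * (1 - ε) := by
      rw [Matrix.trace_smul, Matrix.trace_sub, Matrix.trace_smul, htrΨ, hρPtr, hρ₀tr,
        smul_eq_mul, smul_eq_mul, mul_one]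
      norm_num
    have e2 : (((p : ℂ) • (Ψ ρQ - (ε : ℂ) • ρ₀)).trace).re = p * (1 - ε) := by
      rw [Matrix.trace_smul, Matrix.trace_sub, Matrix.trace_smul, htrΨ, hρQtr, hρ₀tr,
        smul_eq_mul, smul_eq_mul, mul_one]
      norm_num
    rw [hEq]
    rw [← hpq]
    linarith [h1, e1, e2]

/-- Continuous-time mixing estimate for a positive trace-preserving semigroup satisfying a
Doeblin-type minorization at some time `t₀`:
`‖Φ_t(ρ) − ρ°‖₁ ≤ (1−ε)^⌊t/t₀⌋ ‖ρ − ρ°‖₁`. -/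
theorem doeblin_semigroup_mixing {n : ℕ}
    (Φ : ℝ → Module.End ℂ (Matrix (Fin n) (Fin n) ℂ))
    (hΦ0 : Φ 0 = 1)
    (hsemi : ∀ t s : ℝ, 0 ≤ t → 0 ≤ s → Φ (t + s) = Φ t * Φ s)
    (hpos : ∀ t : ℝ, 0 ≤ t →
      ∀ A : Matrix (Fin n) (Fin n) ℂ, A.PosSemidef → (Φ t A).PosSemidef)
    (htr : ∀ t : ℝ, 0 ≤ t →
      ∀ A : Matrix (Fin n) (Fin n) ℂ, (Φ t A).trace = A.trace)
    (ρ₀ : Matrix (Fin n) (Fin n) ℂ) (hρ₀ : ρ₀.PosSemidef) (hρ₀tr : ρ₀.trace = 1)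
    (hfix : ∀ t : ℝ, 0 ≤ t → Φ t ρ₀ = ρ₀)
    (t₀ : ℝ) (ht₀ : 0 < t₀)
    (ε : ℝ) (hε0 : 0 < ε) (hε1 : ε ≤ 1)
    (hDoeblin : ∀ ρ : Matrix (Fin n) (Fin n) ℂ, ρ.PosSemidef → ρ.trace = 1 →
      (Φ t₀ ρ - (ε : ℂ) • ρ₀).PosSemidef)
    (t : ℝ) (ht : 0 ≤ t)
    (ρ : Matrix (Fin n) (Fin n) ℂ) (hρ : ρ.PosSemidef) (hρtr : ρ.trace = 1) :
    traceNorm (Φ t ρ - ρ₀) ≤ (1 - ε) ^ ⌊t / t₀⌋₊ * traceNorm (ρ - ρ₀) := by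
  have hone : (0:ℝ) ≤ 1 - ε := by linarith
  have iter : ∀ k : ℕ, ∀ r : ℝ, 0 ≤ r → ∀ A : Matrix (Fin n) (Fin n) ℂ,
      A.IsHermitian → A.trace = 0 →
      traceNorm (Φ (r + k * t₀) A) ≤ (1 - ε) ^ k * traceNorm A := by
    intro k
    induction k with
    | zero =>
      intro r hr A hA _
      have hr0 : r + (0:ℕ) * t₀ = r := by push_cast; ring
      rw [hr0, pow_zero, one_mul]
      exact contraction_map (Φ r) (hpos r hr) (htr r hr) hA
    | succ k ih =>
      intro r hr A hA hAtr
      have hsplit : r + ((k:ℕ)+1 : ℕ) * t₀ = (r + k * t₀) + t₀ := by push_cast; ring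
      have hΦ : Φ (r + ((k:ℕ)+1:ℕ) * t₀) A = Φ (r + k * t₀) (Φ t₀ A) := by
        rw [hsplit, hsemi (r + k*t₀) t₀ (by positivity) ht₀.le, Module.End.mul_apply]
      have hA' : (Φ t₀ A).IsHermitian := herm_map (Φ t₀) (hpos t₀ ht₀.le) hA
      have hA'tr : (Φ t₀ A).trace = 0 := by rw [htr t₀ ht₀.le, hAtr]
      have h1 := ih r hr (Φ t₀ A) hA' hA'tr
      have h2 := doeblin_step (Φ t₀) (hpos t₀ ht₀.le) (htr t₀ ht₀.le) ρ₀ hρ₀tr ε hε1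
        (hDoeblin) hA hAtr
      rw [hΦ]
      calc traceNorm (Φ (r + k*t₀) (Φ t₀ A)) ≤ (1-ε)^k * traceNorm (Φ t₀ A) := h1
        _ ≤ (1-ε)^k * ((1-ε) * traceNorm A) :=
            mul_le_mul_of_nonneg_left h2 (pow_nonneg hone k)
        _ = (1-ε)^(k+1) * traceNorm A := by ring
  set k := ⌊t / t₀⌋₊ with hk
  have hkle : (k:ℝ) * t₀ ≤ t := by
    rw [← le_div_iff₀ ht₀]
    exact Nat.floor_le (div_nonneg ht ht₀.le)
  have hr : 0 ≤ t - k * t₀ := by linarith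
  have hΔ : (ρ - ρ₀).IsHermitian := hρ.1.sub hρ₀.1
  have hΔtr : (ρ - ρ₀).trace = 0 := by rw [Matrix.trace_sub, hρtr, hρ₀tr]; ring
  have hmain := iter k (t - k*t₀) hr (ρ - ρ₀) hΔ hΔtr
  have ht' : t - (k:ℝ)*t₀ + (k:ℝ)*t₀ = t := by ring
  rw [ht'] at hmain
  have hsub : Φ t (ρ - ρ₀) = Φ t ρ - ρ₀ := by rw [map_sub, hfix t ht]
  rw [hsub] at hmain
  exact hmain
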